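/- Let 0 < k < n. Let μ : [k] ⟶ [n] be the monomorphism of the simplex category with μ(i) = i, and let X be the pushout in SSet of the induced map Δ[k] ⟶ Δ[n] along the unique map Δ[k] ⟶ Δ[0], with coprojection x̄ : Δ[n] ⟶ X. Let ρ : [n] ⟶ [n−k] be the epimorphism of the simplex category with ρ(i) = 0 for i ≤ k and ρ(i) = i − k for i ≥ k, and let Y be the pushout in SSet of the induced map Δ[n] ⟶ Δ[n−k] along x̄. Then the coprojection Δ[n−k] ⟶ Y is an isomorphism; consequently every simplicial map from X to a non-singular simplicial set factors uniquely through the coprojection X ⟶ Y ≅ Δ[n−k] (i.e., the desingularization of X is Δ[n−k]). -/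

import Mathlib

open CategoryTheory CategoryTheory.Limits Simplicial SSet

/-- The `i`-th vertex of an `n`-simplex `x`, i.e. `x · εᵢ`, where `εᵢ : [0] ⟶ [n]`
sends `0` to `i`. -/
def SSet.vertex (X : SSet) {n : ℕ} (x : X _⦋n⦌) (i : Fin (n + 1)) : X _⦋0⦌ :=
  X.map (SimplexCategory.const ⦋0⦌ ⦋n⦌ i).op x

/-- A simplex is degenerate if it is obtained from a simplex of strictly lower degree
by the action of a (necessarily non-identity) epimorphism of the simplex category. -/
def SSet.IsDegenerate (X : SSet) {n : ℕ} (x : X _⦋n⦌) : Prop :=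
  ∃ (m : ℕ) (_ : m < n) (σ : (⦋n⦌ : SimplexCategory) ⟶ ⦋m⦌) (y : X _⦋m⦌),
    Epi σ ∧ x = X.map σ.op y

/-- A simplicial set is non-singular if the representing map of each of its
non-degenerate simplices is a monomorphism. -/
def SSet.NonSingular (X : SSet) : Prop :=
  ∀ (n : ℕ) (x : X _⦋n⦌), ¬ X.IsDegenerate x → Mono ((SSet.yonedaEquiv (X := X) (n := ⦋n⦌)).symm x)

/-- The relation `≈ₓ` on `Fin (n + 1)`: `i ≈ₓ k` iff there exists `j` with
`i ≤ k`, `k ≤ j` and `x·εᵢ = x·εⱼ`. -/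
def SSet.approxRel (X : SSet) {n : ℕ} (x : X _⦋n⦌) (i k : Fin (n + 1)) : Prop :=
  ∃ j, i ≤ k ∧ k ≤ j ∧ X.vertex x i = X.vertex x j

/-- The equivalence relation `Rₓ` generated by `≈ₓ`. -/
def SSet.vertexRel (X : SSet) {n : ℕ} (x : X _⦋n⦌) : Fin (n + 1) → Fin (n + 1) → Prop :=
  Relation.EqvGen (X.approxRel x)

instance Δ0_subsingleton (m : SimplexCategoryᵒᵖ) : Subsingleton (Δ[0].obj m) :=
  SSet.stdSimplex.objEquiv.subsingleton

/-- The unique map to the standard `0`-simplex, which is terminal in `SSet`. -/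
def SSet.toPt (Y : SSet.{0}) : Y ⟶ Δ[0] where
  app m := ↾fun _ => SSet.stdSimplex.const 0 0 m
  naturality _ _ _ := by ext; exact Subsingleton.elim _ _

/- ### Auxiliary lemmas -/

lemma Desing.toPt_unique {B : SSet.{0}} (u v : B ⟶ Δ[0]) : u = v := by
  ext m x

lemma Desing.yonedaEquiv_comp_map {A : SSet.{0}} {n m : SimplexCategory}
    (g : SSet.stdSimplex.obj n ⟶ A) (φ : m ⟶ n) :
    SSet.yonedaEquiv (X := A) (n := m) (SSet.stdSimplex.map φ ≫ g) = A.map φ.op (SSet.yonedaEquiv (X := A) (n := n) g) := by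
  exact (SSet.yonedaEquiv_naturality φ g).symm

/-- Eilenberg–Zilber existence: every simplex is the image of a non-degenerate simplex
under an epimorphism. -/
lemma Desing.exists_nondeg (A : SSet.{0}) : ∀ (n : ℕ) (a : A _⦋n⦌),
    ∃ (m : ℕ) (σ : (⦋n⦌ : SimplexCategory) ⟶ ⦋m⦌) (b : A _⦋m⦌),
      Epi σ ∧ ¬ A.IsDegenerate b ∧ a = A.map σ.op b := by
  intro n
  induction n using Nat.strong_induction_on with
  | _ n ih =>
    intro a
    by_cases h : A.IsDegenerate a
    · obtain ⟨m, hm, σ, y, hσ, rfl⟩ := h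
      obtain ⟨m', σ', b, h1, h2, rfl⟩ := ih m hm y
      refine ⟨m', σ ≫ σ', b, @epi_comp _ _ _ _ _ _ hσ _ h1, h2, ?_⟩
      rw [op_comp, FunctorToTypes.map_comp_apply]
    · exact ⟨n, 𝟙 _, a, inferInstance, h, by simp⟩

lemma Desing.vertex_map {A : SSet.{0}} {n m : ℕ} (σ : (⦋n⦌ : SimplexCategory) ⟶ ⦋m⦌)
    (b : A _⦋m⦌) (i : Fin (n + 1)) :
    A.vertex (A.map σ.op b) i = A.vertex b (σ.toOrderHom i) := by
  dsimp [SSet.vertex]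
  rw [← FunctorToTypes.map_comp_apply, ← op_comp, SimplexCategory.const_comp]

lemma Desing.vertex_injective {A : SSet.{0}} {m : ℕ} {b : A _⦋m⦌}
    (hb : Mono ((SSet.yonedaEquiv (X := A) (n := ⦋m⦌)).symm b)) {i j : Fin (m + 1)}
    (h : A.vertex b i = A.vertex b j) : i = j := by
  have hm : Mono (((SSet.yonedaEquiv (X := A) (n := ⦋m⦌)).symm b).app (Opposite.op ⦋0⦌)) :=
    (NatTrans.mono_iff_mono_app _).1 hb (Opposite.op ⦋0⦌)
  rw [CategoryTheory.mono_iff_injective] at hm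
  have := hm (a₁ := SSet.stdSimplex.objEquiv.symm (SimplexCategory.const ⦋0⦌ ⦋m⦌ i))
    (a₂ := SSet.stdSimplex.objEquiv.symm (SimplexCategory.const ⦋0⦌ ⦋m⦌ j)) h
  have := SSet.stdSimplex.objEquiv.symm.injective this
  exact congrArg (fun (f : (⦋0⦌ : SimplexCategory) ⟶ ⦋m⦌) => f.toOrderHom 0) this

lemma Desing.epi_apply_zero {n m : ℕ} (σ : (⦋n⦌ : SimplexCategory) ⟶ ⦋m⦌) (hσ : Epi σ) :
    σ.toOrderHom 0 = 0 := by
  obtain ⟨i, hi⟩ := SimplexCategory.epi_iff_surjective.1 hσ 0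
  exact le_antisymm (hi ▸ σ.toOrderHom.monotone (Fin.zero_le i)) (Fin.zero_le _)

lemma Desing.epi_toPt (k : ℕ) : Epi (SSet.toPt Δ[k]) := by
  haveI : ∀ (X : SimplexCategoryᵒᵖ), Epi ((SSet.toPt Δ[k]).app X) := by
    intro m
    rw [CategoryTheory.epi_iff_surjective]
    intro y
    exact ⟨SSet.stdSimplex.objEquiv.symm (SimplexCategory.const _ ⦋k⦌ 0),
      Subsingleton.elim _ _⟩
  exact NatTrans.epi_of_epi_app _

/-- Let `0 < k < n`, let `X` be the pushout of `Δ[k] ⟶ Δ[n]` (induced by the front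
face `μ : [k] ⟶ [n]`, `μ i = i`) along `Δ[k] ⟶ Δ[0]`, with coprojection
`x̄ : Δ[n] ⟶ X`, and let `Y` be the pushout of the map `Δ[n] ⟶ Δ[n-k]` induced by
`ρ : [n] ⟶ [n-k]` (`ρ i = i - k`, truncated subtraction) along `x̄`. Then the
coprojection `Δ[n-k] ⟶ Y` is an isomorphism and every map from `X` to a
non-singular simplicial set factors uniquely through `X ⟶ Y`: the
desingularization of `X` is `Δ[n-k]`. -/
theorem desingularization_collapsed_simplex (k n : ℕ) (h0 : 0 < k) (hkn : k < n)
    (μ : (⦋k⦌ : SimplexCategory) ⟶ ⦋n⦌)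
    (hμ : ∀ i : Fin (k + 1), (μ.toOrderHom i : ℕ) = (i : ℕ))
    (ρ : (⦋n⦌ : SimplexCategory) ⟶ ⦋n - k⦌)
    (hρ : ∀ i : Fin (n + 1), (ρ.toOrderHom i : ℕ) = (i : ℕ) - k) :
    IsIso (pushout.inl (SSet.stdSimplex.map ρ)
      (pushout.inl (SSet.stdSimplex.map μ) (SSet.toPt Δ[k]))) ∧
    ∀ (A : SSet.{0}), A.NonSingular →
      ∀ f : pushout (SSet.stdSimplex.map μ) (SSet.toPt Δ[k]) ⟶ A,
        ∃! fbar : pushout (SSet.stdSimplex.map ρ)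
            (pushout.inl (SSet.stdSimplex.map μ) (SSet.toPt Δ[k])) ⟶ A,
          f = pushout.inr (SSet.stdSimplex.map ρ)
            (pushout.inl (SSet.stdSimplex.map μ) (SSet.toPt Δ[k])) ≫ fbar := by
  haveI : Epi (SSet.toPt Δ[k]) := Desing.epi_toPt k
  haveI hepix : Epi (pushout.inl (SSet.stdSimplex.map μ) (SSet.toPt Δ[k])) :=
    pushout.inl_of_epi
  -- the section δ of ρ
  let δ : (⦋n - k⦌ : SimplexCategory) ⟶ ⦋n⦌ :=
    SimplexCategory.mkHom ⟨fun j => ⟨j + k, by have := j.isLt; omega⟩,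
      fun a b hab => by exact Fin.mk_le_mk.mpr (Nat.add_le_add_right hab k)⟩
  have hδval : ∀ j : Fin (n - k + 1), (δ.toOrderHom j : ℕ) = j + k := fun j => rfl
  have hδρ : δ ≫ ρ = 𝟙 _ := by
    apply SimplexCategory.Hom.ext
    apply OrderHom.ext
    funext j
    apply Fin.ext
    rw [SimplexCategory.comp_toOrderHom]
    show ((ρ.toOrderHom (δ.toOrderHom j)) : ℕ) = ((j : Fin (n - k + 1)) : ℕ)
    rw [hρ, hδval]
    omega
  have hθσfact : ∀ (m : ℕ) (σ : (⦋n⦌ : SimplexCategory) ⟶ ⦋m⦌),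
      (∀ i : Fin (n + 1), (i : ℕ) ≤ k → σ.toOrderHom i = 0) → (ρ ≫ δ) ≫ σ = σ := by
    intro m σ hσk
    apply SimplexCategory.Hom.ext
    apply OrderHom.ext
    funext i
    rw [SimplexCategory.comp_toOrderHom, SimplexCategory.comp_toOrderHom]
    show σ.toOrderHom (δ.toOrderHom (ρ.toOrderHom i)) = σ.toOrderHom i
    by_cases hik : (i : ℕ) ≤ k
    · have h1 : δ.toOrderHom (ρ.toOrderHom i) = (⟨k, by omega⟩ : Fin (n + 1)) := by
        apply Fin.ext
        rw [hδval, hρ]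
        show (i : ℕ) - k + k = k
        omega
      have h2 : ((⟨k, by omega⟩ : Fin (n + 1)) : ℕ) ≤ k := le_refl k
      rw [h1, hσk _ h2, hσk i hik]
    · have h1 : δ.toOrderHom (ρ.toOrderHom i) = i := by
        apply Fin.ext
        rw [hδval, hρ]
        show (i : ℕ) - k + k = (i : ℕ)
        omega
      rw [h1]
  -- the map X ⟶ Δ[n-k]
  have hμρ : μ ≫ ρ = SimplexCategory.const ⦋k⦌ ⦋0⦌ 0 ≫ SimplexCategory.const ⦋0⦌ ⦋n - k⦌ 0 := by
    apply SimplexCategory.Hom.ext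
    apply OrderHom.ext
    funext i
    apply Fin.ext
    rw [SimplexCategory.comp_toOrderHom, SimplexCategory.comp_toOrderHom]
    show ((ρ.toOrderHom (μ.toOrderHom i)) : ℕ) =
      (((SimplexCategory.const ⦋0⦌ ⦋n - k⦌ 0).toOrderHom
        ((SimplexCategory.const ⦋k⦌ ⦋0⦌ 0).toOrderHom i)) : ℕ)
    rw [hρ]
    have h2 := hμ i
    have h3 : (i : ℕ) < k + 1 := i.isLt
    simp only [SimplexCategory.const_apply]
    show (μ.toOrderHom i : ℕ) - k = ((0 : Fin (n - k + 1)) : ℕ)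
    rw [h2]
    simp only [Fin.val_zero]
    omega
  have hc : SSet.stdSimplex.map μ ≫ SSet.stdSimplex.map ρ =
      SSet.toPt Δ[k] ≫ SSet.stdSimplex.map (SimplexCategory.const ⦋0⦌ ⦋n - k⦌ 0) := by
    rw [← Functor.map_comp (self := SSet.stdSimplex), hμρ, Functor.map_comp (self := SSet.stdSimplex)]
    congr 1
  set t := pushout.desc (SSet.stdSimplex.map ρ)
    (SSet.stdSimplex.map (SimplexCategory.const ⦋0⦌ ⦋n - k⦌ 0)) hc with ht
  have hxt : pushout.inl (SSet.stdSimplex.map μ) (SSet.toPt Δ[k]) ≫ t =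
      SSet.stdSimplex.map ρ := pushout.inl_desc _ _ _
  constructor
  · -- Part 1
    refine ⟨pushout.desc (𝟙 _) t (by rw [Category.comp_id, hxt]), pushout.inl_desc _ _ _, ?_⟩
    apply pushout.hom_ext
    · rw [← Category.assoc, pushout.inl_desc, Category.id_comp, Category.comp_id]
    · rw [← Category.assoc, pushout.inr_desc, Category.comp_id,
        ← cancel_epi (pushout.inl (SSet.stdSimplex.map μ) (SSet.toPt Δ[k])),
        ← Category.assoc, hxt, pushout.condition]
  · -- Part 2
    intro A hA f
    set g : Δ[n] ⟶ A := pushout.inl (SSet.stdSimplex.map μ) (SSet.toPt Δ[k]) ≫ f with hg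
    set a : A _⦋n⦌ := SSet.yonedaEquiv (X := A) (n := ⦋n⦌) g with ha
    obtain ⟨m, σ, b, hepi, hnd, hab⟩ := Desing.exists_nondeg A n a
    have hmono := hA m b hnd
    have hσ0 : σ.toOrderHom 0 = 0 := Desing.epi_apply_zero σ hepi
    have vert_eq : ∀ (i : Fin (n + 1)), (i : ℕ) ≤ k →
        A.vertex a i = SSet.yonedaEquiv (X := A) (n := ⦋0⦌) (SSet.toPt Δ[0] ≫
          pushout.inr (SSet.stdSimplex.map μ) (SSet.toPt Δ[k]) ≫ f) := by
      intro i hi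
      have hconst : SimplexCategory.const ⦋0⦌ ⦋n⦌ i =
          SimplexCategory.const ⦋0⦌ ⦋k⦌ ⟨(i : ℕ), by
            show (i : ℕ) < k + 1
            omega⟩ ≫ μ := by
        rw [SimplexCategory.const_comp]
        congr 1
        apply Fin.ext
        rw [hμ]
      have h1 : A.vertex a i =
          SSet.yonedaEquiv (X := A) (n := ⦋0⦌) (SSet.stdSimplex.map (SimplexCategory.const ⦋0⦌ ⦋n⦌ i) ≫ g) :=
        (Desing.yonedaEquiv_comp_map g _).symm
      rw [h1, hconst, Functor.map_comp (self := SSet.stdSimplex), Category.assoc, hg, ← Category.assoc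
        (SSet.stdSimplex.map μ), pushout.condition, ← Category.assoc, ← Category.assoc,
        ← Category.assoc]
      congr 2
    have hσk : ∀ i : Fin (n + 1), (i : ℕ) ≤ k → σ.toOrderHom i = 0 := by
      intro i hi
      have h1 : A.vertex a i = A.vertex a 0 := by
        rw [vert_eq i hi, vert_eq 0 (by simp)]
      rw [hab, Desing.vertex_map, Desing.vertex_map] at h1
      have h2 := Desing.vertex_injective hmono h1
      exact h2.trans hσ0
    have hθσ := hθσfact m σ hσk
    have hθg : SSet.stdSimplex.map (ρ ≫ δ) ≫ g = g := by
      apply (SSet.yonedaEquiv (X := A) (n := ⦋n⦌)).injective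
      rw [Desing.yonedaEquiv_comp_map, ← ha, hab, ← FunctorToTypes.map_comp_apply, ← op_comp,
        hθσ]
    haveI : IsSplitEpi (SSet.stdSimplex.map ρ) :=
      ⟨⟨{ section_ := SSet.stdSimplex.map δ,
          id := by rw [← Functor.map_comp (self := SSet.stdSimplex), hδρ, CategoryTheory.Functor.map_id (self := SSet.stdSimplex)] }⟩⟩
    haveI : Epi (pushout.inr (SSet.stdSimplex.map ρ)
        (pushout.inl (SSet.stdSimplex.map μ) (SSet.toPt Δ[k]))) := pushout.inr_of_epi
    have hw : SSet.stdSimplex.map ρ ≫ (SSet.stdSimplex.map δ ≫ g) =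
        pushout.inl (SSet.stdSimplex.map μ) (SSet.toPt Δ[k]) ≫ f := by
      rw [← Category.assoc, ← Functor.map_comp (self := SSet.stdSimplex), hθg, hg]
    refine ⟨pushout.desc _ f hw, (pushout.inr_desc _ _ _).symm, ?_⟩
    intro y hy
    apply (cancel_epi (pushout.inr (SSet.stdSimplex.map ρ)
      (pushout.inl (SSet.stdSimplex.map μ) (SSet.toPt Δ[k])))).1
    rw [pushout.inr_desc, ← hy]
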